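/- Let Θ ⊆ ℝ^p be a nonempty set, let 0 < δ < D < ∞ and J = [δ, D], and let g, h : ℝ^p → ℝ be twice differentiable with g(θ), h(θ) ∈ J for all θ ∈ Θ and with sup_{θ∈Θ}‖∇g‖, sup_{θ∈Θ}‖∇h‖, sup_{θ∈Θ}‖∇²g‖, sup_{θ∈Θ}‖∇²h‖ all finite. Let ψ : ℝ → ℝ be three times differentiable with M₁ := sup_{x∈J}|ψ'(x)|, M₂ := sup_{x∈J}|ψ''(x)|, M₃ := sup_{x∈J}|ψ'''(x)| all finite. Then sup_{θ∈Θ} ‖∇²(ψ∘g)(θ) − ∇²(ψ∘h)(θ)‖ ≤ M₃ · (sup_Θ‖∇h‖)² · sup_Θ|g − h| + M₁ · sup_Θ‖∇²g − ∇²h‖ + M₂ · sup_Θ‖∇²h‖ · sup_Θ|g − h| + 2 M₂ · sup_Θ‖∇h‖ · sup_Θ‖∇g − ∇h‖ + M₂ · (sup_Θ‖∇g − ∇h‖)², provided the suprema of |g − h|, ‖∇g − ∇h‖ and ‖∇²g − ∇²h‖ over Θ are finite. -/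

import Mathlib

section Aux

variable {E : Type*} [NormedAddCommGroup E] [NormedSpace ℝ E]

private lemma fderiv_real_apply' (f : ℝ → ℝ) (y : ℝ) (t : ℝ) :
    fderiv ℝ f y t = t * deriv f y := by
  have h := (fderiv ℝ f y).map_smul t (1 : ℝ)
  simpa [fderiv_apply_one_eq_deriv] using h

private lemma fderiv_comp_scalar' (g : E → ℝ) (ψ : ℝ → ℝ)
    (hgd : Differentiable ℝ g) (hψ1 : Differentiable ℝ ψ) :
    fderiv ℝ (fun x => ψ (g x)) = fun x => deriv ψ (g x) • fderiv ℝ g x := by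
  funext x
  rw [show (fun x => ψ (g x)) = ψ ∘ g from rfl, fderiv_comp x (hψ1 _) (hgd x)]
  ext v
  simp [fderiv_real_apply', mul_comm]

private lemma hessian_comp' (g : E → ℝ) (ψ : ℝ → ℝ)
    (hgd : Differentiable ℝ g) (hgd2 : Differentiable ℝ (fderiv ℝ g))
    (hψ1 : Differentiable ℝ ψ) (hψ2 : Differentiable ℝ (deriv ψ)) (θ : E) :
    fderiv ℝ (fderiv ℝ (fun x => ψ (g x))) θ =
      deriv ψ (g θ) • fderiv ℝ (fderiv ℝ g) θ +
      ((deriv (deriv ψ) (g θ)) • fderiv ℝ g θ).smulRight (fderiv ℝ g θ) := by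
  rw [fderiv_comp_scalar' g ψ hgd hψ1]
  have hc : HasFDerivAt (fun x => deriv ψ (g x))
      ((deriv (deriv ψ) (g θ)) • fderiv ℝ g θ) θ := by
    have h2 := ((hψ2 (g θ)).hasFDerivAt.comp θ (hgd θ).hasFDerivAt)
    refine h2.congr_fderiv ?_
    ext v
    simp [fderiv_real_apply', mul_comm]
  have hf : HasFDerivAt (fderiv ℝ g) (fderiv ℝ (fderiv ℝ g) θ) θ := (hgd2 θ).hasFDerivAt
  exact (hc.smul hf).fderiv

end Aux

set_option maxHeartbeats 1000000 in
set_option synthInstance.maxHeartbeats 400000 in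
/-- Theorem 12(iii) of the paper (the `k = 2` composition bound for Hessians),
with `M_j = sup_{x∈J}|ψ^{(j)}|` on `J = [δ, D]`; the Hessian is `fderiv ℝ (fderiv ℝ ·)`
with its operator norm. -/
theorem stmt_12 {p : ℕ} (Θ : Set (EuclideanSpace ℝ (Fin p))) (hΘ : Θ.Nonempty)
    (δ D : ℝ) (hδ : 0 < δ) (hδD : δ < D)
    (g h : EuclideanSpace ℝ (Fin p) → ℝ)
    (hgd : Differentiable ℝ g) (hgd2 : Differentiable ℝ (fderiv ℝ g))
    (hhd : Differentiable ℝ h) (hhd2 : Differentiable ℝ (fderiv ℝ h))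
    (hgmem : ∀ θ ∈ Θ, g θ ∈ Set.Icc δ D) (hhmem : ∀ θ ∈ Θ, h θ ∈ Set.Icc δ D)
    (hbgg : BddAbove ((fun θ => ‖gradient g θ‖) '' Θ))
    (hbgh : BddAbove ((fun θ => ‖gradient h θ‖) '' Θ))
    (hbHg : BddAbove ((fun θ => ‖fderiv ℝ (fderiv ℝ g) θ‖) '' Θ))
    (hbHh : BddAbove ((fun θ => ‖fderiv ℝ (fderiv ℝ h) θ‖) '' Θ))
    (ψ : ℝ → ℝ) (hψ1 : Differentiable ℝ ψ) (hψ2 : Differentiable ℝ (deriv ψ))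
    (hψ3 : Differentiable ℝ (deriv (deriv ψ)))
    (hM1 : BddAbove ((fun x => |deriv ψ x|) '' Set.Icc δ D))
    (hM2 : BddAbove ((fun x => |deriv (deriv ψ) x|) '' Set.Icc δ D))
    (hM3 : BddAbove ((fun x => |deriv (deriv (deriv ψ)) x|) '' Set.Icc δ D))
    (hb0 : BddAbove ((fun θ => |g θ - h θ|) '' Θ))
    (hb1 : BddAbove ((fun θ => ‖gradient g θ - gradient h θ‖) '' Θ))
    (hb2 : BddAbove ((fun θ => ‖fderiv ℝ (fderiv ℝ g) θ - fderiv ℝ (fderiv ℝ h) θ‖) '' Θ)) :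
    sSup ((fun θ => ‖fderiv ℝ (fderiv ℝ (fun x => ψ (g x))) θ -
        fderiv ℝ (fderiv ℝ (fun x => ψ (h x))) θ‖) '' Θ) ≤
      sSup ((fun x => |deriv (deriv (deriv ψ)) x|) '' Set.Icc δ D) *
          sSup ((fun θ => ‖gradient h θ‖) '' Θ) ^ 2 *
          sSup ((fun θ => |g θ - h θ|) '' Θ) +
        sSup ((fun x => |deriv ψ x|) '' Set.Icc δ D) *
          sSup ((fun θ => ‖fderiv ℝ (fderiv ℝ g) θ - fderiv ℝ (fderiv ℝ h) θ‖) '' Θ) +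
        sSup ((fun x => |deriv (deriv ψ) x|) '' Set.Icc δ D) *
          sSup ((fun θ => ‖fderiv ℝ (fderiv ℝ h) θ‖) '' Θ) *
          sSup ((fun θ => |g θ - h θ|) '' Θ) +
        2 * sSup ((fun x => |deriv (deriv ψ) x|) '' Set.Icc δ D) *
          sSup ((fun θ => ‖gradient h θ‖) '' Θ) *
          sSup ((fun θ => ‖gradient g θ - gradient h θ‖) '' Θ) +
        sSup ((fun x => |deriv (deriv ψ) x|) '' Set.Icc δ D) *
          sSup ((fun θ => ‖gradient g θ - gradient h θ‖) '' Θ) ^ 2 := by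
  classical
  set M1 := sSup ((fun x => |deriv ψ x|) '' Set.Icc δ D) with hM1def
  set M2 := sSup ((fun x => |deriv (deriv ψ) x|) '' Set.Icc δ D) with hM2def
  set M3 := sSup ((fun x => |deriv (deriv (deriv ψ)) x|) '' Set.Icc δ D) with hM3def
  set Gh := sSup ((fun θ => ‖gradient h θ‖) '' Θ) with hGhdef
  set HhS := sSup ((fun θ => ‖fderiv ℝ (fderiv ℝ h) θ‖) '' Θ) with hHhdef
  set e0 := sSup ((fun θ => |g θ - h θ|) '' Θ) with he0def
  set e1 := sSup ((fun θ => ‖gradient g θ - gradient h θ‖) '' Θ) with he1def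
  set e2 := sSup ((fun θ => ‖fderiv ℝ (fderiv ℝ g) θ - fderiv ℝ (fderiv ℝ h) θ‖) '' Θ)
    with he2def
  -- norms via gradient
  have hgradnorm : ∀ (f : EuclideanSpace ℝ (Fin p) → ℝ) (x : EuclideanSpace ℝ (Fin p)), ‖gradient f x‖ = ‖fderiv ℝ f x‖ := fun f x =>
    (InnerProductSpace.toDual ℝ (EuclideanSpace ℝ (Fin p))).symm.norm_map _
  have hgradsub : ∀ (x : EuclideanSpace ℝ (Fin p)),
      ‖gradient g x - gradient h x‖ = ‖fderiv ℝ g x - fderiv ℝ h x‖ := by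
    intro x
    rw [show gradient g x - gradient h x =
        (InnerProductSpace.toDual ℝ (EuclideanSpace ℝ (Fin p))).symm
          (fderiv ℝ g x - fderiv ℝ h x) by
      simp [gradient, map_sub]]
    exact (InnerProductSpace.toDual ℝ (EuclideanSpace ℝ (Fin p))).symm.norm_map _
  apply csSup_le (hΘ.image _)
  rintro _ ⟨θ, hθ, rfl⟩
  simp only
  -- pointwise quantities
  set a1 := deriv ψ (g θ) with ha1def
  set a2 := deriv ψ (h θ) with ha2def
  set b1 := deriv (deriv ψ) (g θ) with hb1def
  set b2 := deriv (deriv ψ) (h θ) with hb2def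
  set Lg := fderiv ℝ g θ with hLgdef
  set Lh := fderiv ℝ h θ with hLhdef
  set Hg := fderiv ℝ (fderiv ℝ g) θ with hHgdef
  set Hh := fderiv ℝ (fderiv ℝ h) θ with hHh2def
  set d := Lg - Lh with hddef
  -- pointwise bounds by the suprema
  have hLhGh : ‖Lh‖ ≤ Gh := by
    rw [← hgradnorm h θ]; exact le_csSup hbgh ⟨θ, hθ, rfl⟩
  have hHhS : ‖Hh‖ ≤ HhS := le_csSup hbHh ⟨θ, hθ, rfl⟩
  have hde1 : ‖d‖ ≤ e1 := by
    rw [hddef, ← hgradsub θ]; exact le_csSup hb1 ⟨θ, hθ, rfl⟩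
  have hHe2 : ‖Hg - Hh‖ ≤ e2 := le_csSup hb2 ⟨θ, hθ, rfl⟩
  have he0pt : |g θ - h θ| ≤ e0 := le_csSup hb0 ⟨θ, hθ, rfl⟩
  have ha1M : |a1| ≤ M1 := le_csSup hM1 ⟨g θ, hgmem θ hθ, rfl⟩
  have hb1M : |b1| ≤ M2 := le_csSup hM2 ⟨g θ, hgmem θ hθ, rfl⟩
  have hM1nn : 0 ≤ M1 := le_trans (abs_nonneg _) ha1M
  have hM2nn : 0 ≤ M2 := le_trans (abs_nonneg _) hb1M
  have hM3nn : 0 ≤ M3 :=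
    le_trans (abs_nonneg _) (le_csSup hM3 ⟨g θ, hgmem θ hθ, rfl⟩)
  have he0nn : 0 ≤ e0 := le_trans (abs_nonneg _) he0pt
  have he1nn : 0 ≤ e1 := le_trans (norm_nonneg _) hde1
  have he2nn : 0 ≤ e2 := le_trans (ContinuousLinearMap.opNorm_nonneg _) hHe2
  have hGhnn : 0 ≤ Gh := le_trans (norm_nonneg _) hLhGh
  have hHhSnn : 0 ≤ HhS := le_trans (ContinuousLinearMap.opNorm_nonneg _) hHhS
  -- mean value bounds on ψ', ψ''
  have hmvt1 : |a1 - a2| ≤ M2 * e0 := by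
    have key : ‖deriv ψ (g θ) - deriv ψ (h θ)‖ ≤ M2 * ‖g θ - h θ‖ :=
      (convex_Icc δ D).norm_image_sub_le_of_norm_deriv_le
        (fun x _ => hψ2.differentiableAt)
        (fun x hx => by
          simpa [Real.norm_eq_abs] using le_csSup hM2 ⟨x, hx, rfl⟩)
        (hhmem θ hθ) (hgmem θ hθ)
    rw [Real.norm_eq_abs, Real.norm_eq_abs] at key
    calc |a1 - a2| ≤ M2 * |g θ - h θ| := key
      _ ≤ M2 * e0 := mul_le_mul_of_nonneg_left he0pt hM2nn
  have hmvt2 : |b1 - b2| ≤ M3 * e0 := by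
    have key : ‖deriv (deriv ψ) (g θ) - deriv (deriv ψ) (h θ)‖ ≤ M3 * ‖g θ - h θ‖ :=
      (convex_Icc δ D).norm_image_sub_le_of_norm_deriv_le
        (fun x _ => hψ3.differentiableAt)
        (fun x hx => by
          simpa [Real.norm_eq_abs] using le_csSup hM3 ⟨x, hx, rfl⟩)
        (hhmem θ hθ) (hgmem θ hθ)
    rw [Real.norm_eq_abs, Real.norm_eq_abs] at key
    calc |b1 - b2| ≤ M3 * |g θ - h θ| := key
      _ ≤ M3 * e0 := mul_le_mul_of_nonneg_left he0pt hM3nn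
  -- the decomposition identity
  have key : fderiv ℝ (fderiv ℝ (fun x => ψ (g x))) θ -
      fderiv ℝ (fderiv ℝ (fun x => ψ (h x))) θ =
      a1 • (Hg - Hh) + (a1 - a2) • Hh + (b1 - b2) • (Lh.smulRight Lh) +
        b1 • ((d.smulRight Lh) + (Lh.smulRight d) + (d.smulRight d)) := by
    rw [hessian_comp' g ψ hgd hgd2 hψ1 hψ2 θ, hessian_comp' h ψ hhd hhd2 hψ1 hψ2 θ]
    ext v w
    simp only [hddef, ContinuousLinearMap.add_apply, ContinuousLinearMap.sub_apply,
      ContinuousLinearMap.smul_apply, ContinuousLinearMap.smulRight_apply, smul_eq_mul]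
    ring
  rw [key]
  -- norm bounds for each term
  have habs : ∀ (r : ℝ), ‖r‖ = |r| := fun r => Real.norm_eq_abs r
  have t1 : ‖a1 • (Hg - Hh)‖ ≤ M1 * e2 := by
    refine le_trans (ContinuousLinearMap.opNorm_smul_le _ _) ?_
    rw [habs]
    exact mul_le_mul ha1M hHe2 (norm_nonneg _) hM1nn
  have t2 : ‖(a1 - a2) • Hh‖ ≤ (M2 * e0) * HhS := by
    refine le_trans (ContinuousLinearMap.opNorm_smul_le _ _) ?_
    rw [habs]
    exact mul_le_mul hmvt1 hHhS (norm_nonneg _)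
      (mul_nonneg hM2nn he0nn)
  have t3 : ‖(b1 - b2) • (Lh.smulRight Lh)‖ ≤ (M3 * e0) * (Gh * Gh) := by
    refine le_trans (ContinuousLinearMap.opNorm_smul_le _ _) ?_
    rw [habs, ContinuousLinearMap.norm_smulRight_apply]
    exact mul_le_mul hmvt2 (mul_le_mul hLhGh hLhGh (norm_nonneg _) hGhnn)
      (mul_nonneg (norm_nonneg _) (norm_nonneg _)) (mul_nonneg hM3nn he0nn)
  have t4 : ‖b1 • ((d.smulRight Lh) + (Lh.smulRight d) + (d.smulRight d))‖ ≤
      M2 * (e1 * Gh + Gh * e1 + e1 * e1) := by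
    refine le_trans (ContinuousLinearMap.opNorm_smul_le _ _) ?_
    rw [habs]
    have hsum : ‖(d.smulRight Lh) + (Lh.smulRight d) + (d.smulRight d)‖ ≤
        e1 * Gh + Gh * e1 + e1 * e1 := by
      refine le_trans (norm_add₃_le (a := d.smulRight Lh) (b := Lh.smulRight d) (c := d.smulRight d)) ?_
      gcongr ?_ + ?_ + ?_
      · rw [ContinuousLinearMap.norm_smulRight_apply]
        exact mul_le_mul hde1 hLhGh (norm_nonneg _) he1nn
      · rw [ContinuousLinearMap.norm_smulRight_apply]
        exact mul_le_mul hLhGh hde1 (norm_nonneg _) hGhnn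
      · rw [ContinuousLinearMap.norm_smulRight_apply]
        exact mul_le_mul hde1 hde1 (norm_nonneg _) he1nn
    exact mul_le_mul hb1M hsum (norm_nonneg _) hM2nn
  calc ‖a1 • (Hg - Hh) + (a1 - a2) • Hh + (b1 - b2) • (Lh.smulRight Lh) +
        b1 • ((d.smulRight Lh) + (Lh.smulRight d) + (d.smulRight d))‖
      ≤ ‖a1 • (Hg - Hh)‖ + ‖(a1 - a2) • Hh‖ + ‖(b1 - b2) • (Lh.smulRight Lh)‖ +
        ‖b1 • ((d.smulRight Lh) + (Lh.smulRight d) + (d.smulRight d))‖ := by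
        refine le_trans (ContinuousLinearMap.opNorm_add_le _ _) ?_
        exact add_le_add (norm_add₃_le (a := a1 • (Hg - Hh)) (b := (a1 - a2) • Hh) (c := (b1 - b2) • (Lh.smulRight Lh))) le_rfl
    _ ≤ M1 * e2 + (M2 * e0) * HhS + (M3 * e0) * (Gh * Gh) +
        M2 * (e1 * Gh + Gh * e1 + e1 * e1) := by
        exact add_le_add (add_le_add (add_le_add t1 t2) t3) t4
    _ = M3 * Gh ^ 2 * e0 + M1 * e2 + M2 * HhS * e0 + 2 * M2 * Gh * e1 + M2 * e1 ^ 2 := by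
        ring
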